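/- For n ≠ 0, the map ℤ⊕ℤ → ℤ⊕ℤ, (x,y) ↦ (x−y, n·x), is injective; equivalently its kernel is trivial. Consequently in the Mayer–Vietoris sequence the group preceding it maps to zero, yielding K^E(S³) = 0 for the corresponding twist. -/
import Mathlib


/-- The map ℤ⊕ℤ → ℤ⊕ℤ, (x,y) ↦ (x−y, n·x), appearing in the Mayer–Vietoris sequence for
twisted K-theory of S³. -/
def mvMap (n : ℤ) : ℤ × ℤ →+ ℤ × ℤ :=
  AddMonoidHom.mk' (fun p => (p.1 - p.2, n * p.1)) (by
    intro a b
    refine Prod.ext ?_ ?_ <;> simp [Prod.fst_add, Prod.snd_add] <;> ring)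

/-- For n ≠ 0 the map (x,y) ↦ (x−y, n·x) : ℤ⊕ℤ → ℤ⊕ℤ is injective;
equivalently its kernel is trivial (whence K^E(S³) = 0 in the Mayer–Vietoris sequence). -/
theorem stmt_7 (n : ℤ) (hn : n ≠ 0) :
    Function.Injective (mvMap n) ∧ (mvMap n).ker = ⊥ := by
  have hinj : Function.Injective (mvMap n) := by
    rw [injective_iff_map_eq_zero]
    intro ⟨x, y⟩ h
    simp [mvMap, Prod.ext_iff] at h ⊢
    have hx : x = 0 := by rcases h.2 with h' | h' <;> [exact absurd h' hn; exact h']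
    exact ⟨hx, by omega⟩
  exact ⟨hinj, (AddMonoidHom.ker_eq_bot_iff _).2 hinj⟩
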